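/- Let E, F be real Banach spaces and let k be a natural number with k < dim F (the rank of F over ℝ exceeds k). Then F_k = { T ∈ B(E,F) : range T is finite-dimensional with dim range T = k } is path connected: any two operators T₁, T₂ ∈ F_k are joined by a continuous path lying in F_k. -/

import Mathlib

open Function Set Submodule

namespace FkAux


variable {V : Type*} [AddCommGroup V] [Module ℝ V] {k : ℕ}

lemma sum_update_split (y : Fin k → V) (j : Fin k) (v : V) (g : Fin k → ℝ) :
    ∑ i, g i • update y j v i
      = g j • v + ∑ i ∈ Finset.univ.erase j, g i • y i := by
  rw [← Finset.add_sum_erase _ (fun i => g i • update y j v i) (Finset.mem_univ j)]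
  simp only [update_self]
  congr 1
  exact Finset.sum_congr rfl fun i hi => by
    rw [update_of_ne (Finset.ne_of_mem_erase hi)]

lemma sum_erase_eq (y : Fin k → V) (j : Fin k) (g : Fin k → ℝ) :
    ∑ i ∈ Finset.univ.erase j, g i • y i = ∑ i, update g j 0 i • y i := by
  rw [← Finset.add_sum_erase _ (fun i => update g j 0 i • y i) (Finset.mem_univ j)]
  simp only [update_self, zero_smul, zero_add]
  exact Finset.sum_congr rfl fun i hi => by
    rw [update_of_ne (Finset.ne_of_mem_erase hi)]

lemma li_update_of_not_mem_span {y : Fin k → V} (hy : LinearIndependent ℝ y)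
    {v : V} (hv : v ∉ span ℝ (range y)) (j : Fin k) :
    LinearIndependent ℝ (update y j v) := by
  rw [Fintype.linearIndependent_iff] at hy ⊢
  intro g hg
  rw [sum_update_split] at hg
  have hgj : g j = 0 := by
    by_contra h
    apply hv
    have hv' : v = (g j)⁻¹ • (-(∑ i ∈ Finset.univ.erase j, g i • y i)) := by
      have : g j • v = -(∑ i ∈ Finset.univ.erase j, g i • y i) := by
        linear_combination (norm := module) hg
      rw [← this, smul_smul, inv_mul_cancel₀ h, one_smul]
    rw [hv']
    refine smul_mem _ _ (neg_mem (sum_mem fun i _ => smul_mem _ _ (subset_span ⟨i, rfl⟩)))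
  rw [hgj, zero_smul, zero_add, sum_erase_eq] at hg
  intro i
  rcases eq_or_ne i j with rfl | hij
  · exact hgj
  · have := hy _ hg i
    rwa [update_of_ne hij] at this

lemma li_update_span_coeff {y : Fin k → V} (hy : LinearIndependent ℝ y)
    (c : Fin k → ℝ) (j : Fin k) (hcj : c j ≠ 0) :
    LinearIndependent ℝ (update y j (∑ i, c i • y i)) := by
  rw [Fintype.linearIndependent_iff] at hy ⊢
  intro g hg
  rw [sum_update_split, sum_erase_eq] at hg
  have key : ∑ i, (g j * c i + update g j 0 i) • y i = 0 := by
    rw [← hg, Finset.smul_sum, ← Finset.sum_add_distrib]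
    exact Finset.sum_congr rfl fun i _ => by rw [add_smul, smul_smul]
  have hall := fun i => hy _ key i
  have hgj : g j = 0 := by
    have := hall j
    rw [update_self, add_zero, mul_eq_zero] at this
    tauto
  intro i
  rcases eq_or_ne i j with rfl | hij
  · exact hgj
  · have := hall i
    rwa [hgj, zero_mul, zero_add, update_of_ne hij] at this

lemma li_update_neg {y : Fin k → V} (hy : LinearIndependent ℝ y) (j : Fin k) :
    LinearIndependent ℝ (update y j (-(y j))) := by
  have h : -(y j) = ∑ i, (if i = j then (-1 : ℝ) else 0) • y i := by
    simp [ite_smul, Finset.sum_ite_eq']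
  rw [h]
  exact li_update_span_coeff hy _ j (by simp)





variable (R : (Fin k → V) → (Fin k → V) → Prop)

lemma step
    (htrans : ∀ {a b c}, R a b → R b c → R a c)
    (hrefl : ∀ {a}, LinearIndependent ℝ a → R a a)
    (hseg : ∀ (y : Fin k → V) (j : Fin k) (v : V),
      (∀ t : ℝ, t ∈ Icc (0:ℝ) 1 →
        LinearIndependent ℝ (update y j ((1-t) • y j + t • v))) →
      R y (update y j v))
    (hflip : ∀ (y : Fin k → V) (j : Fin k), LinearIndependent ℝ y →
      R y (update y j (-(y j))))
    {z : Fin k → V} (hz : LinearIndependent ℝ z)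
    {y : Fin k → V} (hy : LinearIndependent ℝ y) (j : Fin k)
    (hagree : ∀ i : Fin k, (i:ℕ) < (j:ℕ) → y i = z i) :
    ∃ y', R y y' ∧ LinearIndependent ℝ y' ∧
      ∀ i : Fin k, (i:ℕ) < (j:ℕ) + 1 → y' i = z i := by
  classical
  by_cases hv : z j ∈ span ℝ (range y)
  · obtain ⟨c, hc⟩ := mem_span_range_iff_exists_fun ℝ |>.mp hv
    -- Stage 1: arrange nonzero coefficient at j
    obtain ⟨y₁, c₁, hR1, hy₁, hc₁, hc₁j, hag₁⟩ :
        ∃ (y₁ : Fin k → V) (c₁ : Fin k → ℝ), R y y₁ ∧ LinearIndependent ℝ y₁ ∧ (∑ i, c₁ i • y₁ i = z j)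
          ∧ c₁ j ≠ 0 ∧ ∀ i : Fin k, (i:ℕ) < (j:ℕ) → y₁ i = z i := by
      by_cases hcj : c j = 0
      · have hl : ∃ l : Fin k, (j:ℕ) < (l:ℕ) ∧ c l ≠ 0 := by
          by_contra h
          push_neg at h
          refine hz.notMem_span_image (s := {i : Fin k | (i:ℕ) < (j:ℕ)})
            (x := j) (by simp) ?_
          rw [← hc]
          refine sum_mem fun i _ => ?_
          rcases lt_trichotomy (i:ℕ) (j:ℕ) with hij | hij | hij
          · rw [hagree i hij]
            exact smul_mem _ _ (subset_span ⟨i, hij, rfl⟩)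
          · rw [show i = j from Fin.ext hij, hcj, zero_smul]; exact zero_mem _
          · rw [h i hij, zero_smul]; exact zero_mem _
        obtain ⟨l, hjl, hcl⟩ := hl
        have hlj : l ≠ j := by intro h; rw [h] at hjl; exact absurd hjl (lt_irrefl _)
        have hlj' : (l:ℕ) ≠ (j:ℕ) := by omega
        refine ⟨update y l (y l + y j), update c j (c j - c l), ?_, ?_, ?_, ?_, ?_⟩
        · apply hseg
          intro t ht
          have hvec : (1-t) • y l + t • (y l + y j)
              = ∑ i, (fun i => if i = l then (1:ℝ) else if i = j then t else 0) i • y i := by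
            have hsum : ∑ i, (fun i => if i = l then (1:ℝ) else if i = j then t else 0) i • y i
                = y l + t • y j := by
              have heach : ∀ i : Fin k,
                  (if i = l then (1:ℝ) else if i = j then t else 0) • y i
                    = (if i = l then y i else 0) + (if i = j then t • y i else 0) := by
                intro i
                rcases eq_or_ne i l with rfl | hil
                · simp [hlj]
                · rcases eq_or_ne i j with rfl | hij
                  · simp [hil]
                  · simp [hil, hij]
              simp only [heach, Finset.sum_add_distrib, Finset.sum_ite_eq',
                Finset.mem_univ, if_true]
            rw [hsum]
            module
          rw [hvec]
          exact li_update_span_coeff hy _ l (by simp)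
        · have hvec : y l + y j
              = ∑ i, (fun i => if i = l then (1:ℝ) else if i = j then 1 else 0) i • y i := by
            have heach : ∀ i : Fin k,
                (if i = l then (1:ℝ) else if i = j then 1 else 0) • y i
                  = (if i = l then y i else 0) + (if i = j then (1:ℝ) • y i else 0) := by
              intro i
              rcases eq_or_ne i l with rfl | hil
              · simp [hlj]
              · rcases eq_or_ne i j with rfl | hij
                · simp [hil]
                · simp [hil, hij]
            simp only [heach, Finset.sum_add_distrib, Finset.sum_ite_eq',
              Finset.mem_univ, if_true, one_smul]
          rw [hvec]
          exact li_update_span_coeff hy _ l (by simp)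
        · -- sum identity
          rw [← hc, ← sub_eq_zero, ← Finset.sum_sub_distrib]
          have h0 : ∀ i ∈ Finset.univ, i ∉ ({j, l} : Finset (Fin k)) →
              update c j (c j - c l) i • update y l (y l + y j) i - c i • y i = 0 := by
            intro i _ hi
            simp only [Finset.mem_insert, Finset.mem_singleton, not_or] at hi
            rw [update_of_ne hi.1, update_of_ne hi.2, sub_self]
          rw [← Finset.sum_subset (Finset.subset_univ {j, l}) h0,
            Finset.sum_pair (Ne.symm hlj)]
          rw [update_self, update_of_ne (Ne.symm hlj), update_of_ne hlj, update_self]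
          module
        · rw [update_self]
          rw [hcj, zero_sub, neg_ne_zero]
          exact hcl
        · intro i hi
          rw [update_of_ne (show i ≠ l by intro h; subst h; omega)]
          exact hagree i hi
      · exact ⟨y, c, hrefl hy, hy, hc, hcj, hagree⟩
    -- Stage 2: make coefficient positive
    obtain ⟨y₂, c₂, hR2, hy₂, hc₂, hc₂j, hag₂⟩ :
        ∃ (y₂ : Fin k → V) (c₂ : Fin k → ℝ), R y y₂ ∧ LinearIndependent ℝ y₂ ∧ (∑ i, c₂ i • y₂ i = z j)
          ∧ 0 < c₂ j ∧ ∀ i : Fin k, (i:ℕ) < (j:ℕ) → y₂ i = z i := by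
      rcases lt_or_gt_of_ne hc₁j with hneg | hpos
      · refine ⟨update y₁ j (-(y₁ j)), update c₁ j (-(c₁ j)),
          htrans hR1 (hflip y₁ j hy₁), li_update_neg hy₁ j, ?_, ?_, ?_⟩
        · rw [← hc₁]
          refine Finset.sum_congr rfl fun i _ => ?_
          rcases eq_or_ne i j with rfl | hij
          · simp
          · rw [update_of_ne hij, update_of_ne hij]
        · rw [update_self]; linarith
        · intro i hi
          rw [update_of_ne (fun h => by subst h; omega)]
          exact hag₁ i hi
      · exact ⟨y₁, c₁, hR1, hy₁, hc₁, hpos, hag₁⟩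
    -- Stage 3: final segment
    have hseg3 : ∀ t : ℝ, t ∈ Icc (0:ℝ) 1 →
        LinearIndependent ℝ (update y₂ j ((1-t) • y₂ j + t • z j)) := by
      intro t ht
      have hvec : (1-t) • y₂ j + t • z j
          = ∑ i, (fun i => t * c₂ i + if i = j then 1-t else 0) i • y₂ i := by
        rw [← hc₂, Finset.smul_sum]
        simp only [add_smul, Finset.sum_add_distrib, ite_smul, zero_smul,
          Finset.sum_ite_eq', Finset.mem_univ, if_true, smul_smul]
        abel
      rw [hvec]
      refine li_update_span_coeff hy₂ _ j (ne_of_gt ?_)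
      show (0:ℝ) < t * c₂ j + if j = j then 1 - t else 0
      rw [if_pos rfl]
      rcases lt_or_ge t 1 with h1 | h1
      · nlinarith [mul_nonneg ht.1 hc₂j.le]
      · have ht1 : t = 1 := le_antisymm ht.2 h1
        subst ht1
        norm_num
        exact hc₂j
    refine ⟨update y₂ j (z j), htrans hR2 (hseg y₂ j (z j) hseg3), ?_, ?_⟩
    · have := hseg3 1 ⟨zero_le_one, le_refl 1⟩
      simpa using this
    · intro i hi
      rcases eq_or_ne i j with rfl | hij
      · rw [update_self]
      · rw [update_of_ne hij]
        exact hag₂ i (by omega)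
  · -- direct segment
    have hsegd : ∀ t : ℝ, t ∈ Icc (0:ℝ) 1 →
        LinearIndependent ℝ (update y j ((1-t) • y j + t • z j)) := by
      intro t ht
      rcases eq_or_ne t 0 with rfl | ht0
      · simpa [update_eq_self] using hy
      · refine li_update_of_not_mem_span hy (fun hmem => hv ?_) j
        have hzj : z j = t⁻¹ • (((1-t) • y j + t • z j) - (1-t) • y j) := by
          rw [add_sub_cancel_left, smul_smul, inv_mul_cancel₀ ht0, one_smul]
        rw [hzj]
        exact smul_mem _ _ (sub_mem hmem (smul_mem _ _ (subset_span ⟨j, rfl⟩)))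
    refine ⟨update y j (z j), hseg y j (z j) hsegd, ?_, ?_⟩
    · have := hsegd 1 ⟨zero_le_one, le_refl 1⟩
      simpa using this
    · intro i hi
      rcases eq_or_ne i j with rfl | hij
      · rw [update_self]
      · rw [update_of_ne hij]
        exact hagree i (by omega)

lemma connect
    (htrans : ∀ {a b c}, R a b → R b c → R a c)
    (hrefl : ∀ {a}, LinearIndependent ℝ a → R a a)
    (hseg : ∀ (y : Fin k → V) (j : Fin k) (v : V),
      (∀ t : ℝ, t ∈ Icc (0:ℝ) 1 →
        LinearIndependent ℝ (update y j ((1-t) • y j + t • v))) →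
      R y (update y j v))
    (hflip : ∀ (y : Fin k → V) (j : Fin k), LinearIndependent ℝ y →
      R y (update y j (-(y j))))
    {y z : Fin k → V} (hy : LinearIndependent ℝ y) (hz : LinearIndependent ℝ z) :
    R y z := by
  have H : ∀ (m : ℕ) (y : Fin k → V), LinearIndependent ℝ y →
      (∀ i : Fin k, (i:ℕ) < (k - m : ℕ) → y i = z i) → R y z := by
    intro m
    induction m with
    | zero =>
      intro y hy hag
      have : y = z := funext fun i => hag i (by have := i.isLt; omega)
      rw [this]; exact hrefl hz
    | succ m ih =>
      intro y hy hag
      by_cases hm : k ≤ m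
      · exact ih y hy fun i hi => hag i (by omega)
      · push_neg at hm
        set j : Fin k := ⟨k - (m+1), by omega⟩ with hj
        have hjval : (j:ℕ) = k - (m+1) := rfl
        obtain ⟨y', hR, hy', hag'⟩ := step R htrans hrefl hseg hflip hz hy j
          (fun i hi => hag i (by omega))
        refine htrans hR (ih y' hy' fun i hi => hag' i (by omega))
  exact H k y hy fun i hi => absurd hi (by omega)



variable {E : Type*} [NormedAddCommGroup E] [NormedSpace ℝ E]
  {F : Type*} [NormedAddCommGroup F] [NormedSpace ℝ F] {k : ℕ}

noncomputable def Phi (f : Fin k → (E →L[ℝ] ℝ)) (y : Fin k → F) : E →L[ℝ] F :=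
  ∑ i, (f i).smulRight (y i)

lemma Phi_apply (f : Fin k → (E →L[ℝ] ℝ)) (y : Fin k → F) (x : E) :
    Phi f y x = ∑ i, f i x • y i := by
  simp [Phi]

lemma Phi_update_y (f : Fin k → (E →L[ℝ] ℝ)) (y : Fin k → F) (j : Fin k) (v : F) :
    Phi f (update y j v) = Phi f y + (f j).smulRight (v - y j) := by
  classical
  ext x
  simp only [Phi_apply, ContinuousLinearMap.add_apply, ContinuousLinearMap.smulRight_apply]
  rw [sum_update_split y j v (fun i => f i x),
    ← Finset.add_sum_erase _ (fun i => f i x • y i) (Finset.mem_univ j)]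
  rw [smul_sub]
  abel

lemma Phi_update_f (f : Fin k → (E →L[ℝ] ℝ)) (y : Fin k → F) (j : Fin k) (g : E →L[ℝ] ℝ) :
    Phi (update f j g) y = Phi f y + (g - f j).smulRight (y j) := by
  classical
  ext x
  simp only [Phi_apply, ContinuousLinearMap.add_apply, ContinuousLinearMap.smulRight_apply,
    ContinuousLinearMap.sub_apply]
  have h1 : ∑ i, (update f j g i) x • y i
      = g x • y j + ∑ i ∈ Finset.univ.erase j, f i x • y i := by
    rw [← Finset.add_sum_erase _ (fun i => (update f j g i) x • y i) (Finset.mem_univ j)]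
    simp only [update_self]
    congr 1
    exact Finset.sum_congr rfl fun i hi => by rw [update_of_ne (Finset.ne_of_mem_erase hi)]
  rw [h1, ← Finset.add_sum_erase _ (fun i => f i x • y i) (Finset.mem_univ j), sub_smul]
  abel

lemma Phi_flip (f : Fin k → (E →L[ℝ] ℝ)) (y : Fin k → F) (j : Fin k) :
    Phi f (update y j (-(y j))) = Phi (update f j (-(f j))) y := by
  rw [Phi_update_y, Phi_update_f]
  congr 1
  ext x
  simp only [ContinuousLinearMap.smulRight_apply, ContinuousLinearMap.sub_apply,
    ContinuousLinearMap.neg_apply]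
  module

lemma smulRight_smul (f : E →L[ℝ] ℝ) (t : ℝ) (v : F) :
    f.smulRight (t • v) = t • f.smulRight v := by
  ext x
  simp only [ContinuousLinearMap.smulRight_apply, ContinuousLinearMap.smul_apply]
  rw [smul_comm]

lemma smul_smulRight (f : E →L[ℝ] ℝ) (t : ℝ) (v : F) :
    (t • f).smulRight v = t • f.smulRight v := by
  ext x
  simp [smul_smul]

/-- existence of "dual vectors" for independent continuous functionals -/
lemma exists_eval {f : Fin k → (E →L[ℝ] ℝ)} (hf : LinearIndependent ℝ f) (i : Fin k) :
    ∃ x : E, ∀ l, f l x = Pi.single (M := fun _ : Fin k => ℝ) i 1 l := by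
  classical
  set π : E →ₗ[ℝ] (Fin k → ℝ) := LinearMap.pi (fun l => (f l : E →ₗ[ℝ] ℝ)) with hπ
  have hfl : LinearIndependent ℝ (⇑(ContinuousLinearMap.coeLM ℝ) ∘ f) := by
    refine hf.map' _ ?_
    rw [LinearMap.ker_eq_bot]
    exact fun a b hab => ContinuousLinearMap.coe_injective hab
  have hsurj : LinearMap.range π = ⊤ := by
    by_contra h
    obtain ⟨φ, hφ0, hφ⟩ := Submodule.exists_dual_map_eq_bot_of_lt_top
      (lt_top_iff_ne_top.mpr h) inferInstance
    have hφx : ∀ x : E, φ (π x) = 0 := by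
      intro x
      have : φ (π x) ∈ (LinearMap.range π).map φ := ⟨π x, ⟨x, rfl⟩, rfl⟩
      rw [hφ] at this
      exact (Submodule.mem_bot ℝ).1 this
    have hrep : ∀ v : Fin k → ℝ, φ v = ∑ l, v l * φ (Pi.single l 1) := by
      intro v
      have hv : v = ∑ l, v l • Pi.single (M := fun _ : Fin k => ℝ) l 1 := by
        funext m
        simp [Pi.single_apply, Finset.sum_ite_eq', mul_comm]
      conv_lhs => rw [hv]
      rw [map_sum]
      exact Finset.sum_congr rfl fun l _ => by rw [map_smul, smul_eq_mul]
    have hcoef : ∀ l, φ (Pi.single l 1) = 0 := by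
      apply Fintype.linearIndependent_iff.mp hfl (fun l => φ (Pi.single l 1))
      ext x
      simp only [LinearMap.coe_sum, Finset.sum_apply, LinearMap.smul_apply,
        Function.comp_apply, smul_eq_mul, LinearMap.zero_apply]
      have := hφx x
      rw [hrep (π x)] at this
      rw [← this]
      refine Finset.sum_congr rfl fun l _ => ?_
      rw [mul_comm]
      rfl
    apply hφ0
    refine LinearMap.ext fun v => ?_
    rw [hrep]
    simp [hcoef]
  have hx : (Pi.single (M := fun _ : Fin k => ℝ) i 1) ∈ LinearMap.range π := by
    rw [hsurj]; trivial
  obtain ⟨x, hx⟩ := hx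
  exact ⟨x, fun l => by rw [← hx]; rfl⟩





def Sset (E F : Type*) [NormedAddCommGroup E] [NormedSpace ℝ E]
    [NormedAddCommGroup F] [NormedSpace ℝ F] (k : ℕ) : Set (E →L[ℝ] F) :=
  {T : E →L[ℝ] F | FiniteDimensional ℝ (LinearMap.range (T : E →ₗ[ℝ] F)) ∧
    Module.finrank ℝ (LinearMap.range (T : E →ₗ[ℝ] F)) = k}

lemma range_Phi {f : Fin k → (E →L[ℝ] ℝ)} {y : Fin k → F}
    (hf : LinearIndependent ℝ f) :
    LinearMap.range (Phi f y : E →ₗ[ℝ] F) = span ℝ (range y) := by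
  apply le_antisymm
  · rintro w hw
    obtain ⟨x, rfl⟩ := LinearMap.mem_range.mp hw
    rw [ContinuousLinearMap.coe_coe, Phi_apply]
    exact sum_mem fun i _ => smul_mem _ _ (subset_span ⟨i, rfl⟩)
  · rw [span_le]
    rintro w ⟨i, rfl⟩
    obtain ⟨x, hx⟩ := exists_eval hf i
    refine LinearMap.mem_range.mpr ⟨x, ?_⟩
    rw [ContinuousLinearMap.coe_coe, Phi_apply]
    simp only [hx]
    simp [Pi.single_apply, ite_smul, Finset.sum_ite_eq']

lemma Phi_mem {f : Fin k → (E →L[ℝ] ℝ)} {y : Fin k → F}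
    (hf : LinearIndependent ℝ f) (hy : LinearIndependent ℝ y) :
    Phi f y ∈ Sset E F k := by
  constructor
  · rw [range_Phi hf]
    exact FiniteDimensional.span_of_finite ℝ (finite_range y)
  · rw [range_Phi hf]
    rw [finrank_span_eq_card hy]
    simp

lemma joined_seg_y {f : Fin k → (E →L[ℝ] ℝ)} (hf : LinearIndependent ℝ f)
    (y : Fin k → F) (j : Fin k) (v : F)
    (h : ∀ t : ℝ, t ∈ Icc (0:ℝ) 1 →
      LinearIndependent ℝ (update y j ((1-t) • y j + t • v))) :
    JoinedIn (Sset E F k) (Phi f y) (Phi f (update y j v)) := by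
  have key : ∀ t : ℝ, Phi f (update y j ((1-t) • y j + t • v))
      = Phi f y + t • (f j).smulRight (v - y j) := by
    intro t
    rw [Phi_update_y]
    congr 1
    rw [show (1-t) • y j + t • v - y j = t • (v - y j) by module, smulRight_smul]
  refine JoinedIn.ofLine (f := fun t : ℝ => Phi f y + t • (f j).smulRight (v - y j))
    (Continuous.continuousOn (continuous_const.add (continuous_id.smul continuous_const)))
    (by simp) ?_ ?_
  · show Phi f y + (1:ℝ) • (f j).smulRight (v - y j) = Phi f (update y j v)
    rw [← key 1]
    simp
  · rintro _ ⟨t, ht, rfl⟩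
    show Phi f y + t • (f j).smulRight (v - y j) ∈ Sset E F k
    rw [← key t]
    exact Phi_mem hf (h t ht)

lemma joined_seg_f (f : Fin k → (E →L[ℝ] ℝ)) {z : Fin k → F} (hz : LinearIndependent ℝ z)
    (j : Fin k) (g : E →L[ℝ] ℝ)
    (h : ∀ t : ℝ, t ∈ Icc (0:ℝ) 1 →
      LinearIndependent ℝ (update f j ((1-t) • f j + t • g))) :
    JoinedIn (Sset E F k) (Phi f z) (Phi (update f j g) z) := by
  have key : ∀ t : ℝ, Phi (update f j ((1-t) • f j + t • g)) z
      = Phi f z + t • (g - f j).smulRight (z j) := by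
    intro t
    rw [Phi_update_f]
    congr 1
    rw [show (1-t) • f j + t • g - f j = t • (g - f j) by module, smul_smulRight]
  refine JoinedIn.ofLine (f := fun t : ℝ => Phi f z + t • (g - f j).smulRight (z j))
    (Continuous.continuousOn (continuous_const.add (continuous_id.smul continuous_const)))
    (by simp) ?_ ?_
  · show Phi f z + (1:ℝ) • (g - f j).smulRight (z j) = Phi (update f j g) z
    rw [← key 1]
    simp
  · rintro _ ⟨t, ht, rfl⟩
    show Phi f z + t • (g - f j).smulRight (z j) ∈ Sset E F k
    rw [← key t]
    exact Phi_mem (h t ht) hz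

lemma joined_flip_y (hk : (k : Cardinal) < Module.rank ℝ F)
    {f : Fin k → (E →L[ℝ] ℝ)} (hf : LinearIndependent ℝ f)
    {y : Fin k → F} (hy : LinearIndependent ℝ y) (j : Fin k) :
    JoinedIn (Sset E F k) (Phi f y) (Phi f (update y j (-(y j)))) := by
  obtain ⟨v, hv⟩ : ∃ v : F, v ∉ span ℝ (range y) := by
    by_contra h
    push_neg at h
    have htop : span ℝ (range y) = ⊤ := eq_top_iff.mpr fun w _ => h w
    have : Module.rank ℝ F ≤ (k : Cardinal) := by
      have h1 : Module.rank ℝ ↥(span ℝ (range y)) ≤ Cardinal.mk (range y) :=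
        rank_span_le (range y)
      have h2 : Cardinal.mk (range y) ≤ (k : Cardinal) := by
        have h3 := Cardinal.mk_range_le_lift (f := y)
        simpa using h3
      rw [htop] at h1
      rw [rank_top] at h1
      exact h1.trans h2
    exact absurd hk (not_lt.mpr this)
  have hy1 : LinearIndependent ℝ (update y j v) := li_update_of_not_mem_span hy hv j
  have step1 : JoinedIn (Sset E F k) (Phi f y) (Phi f (update y j v)) := by
    apply joined_seg_y hf
    intro t ht
    rcases eq_or_ne t 0 with rfl | ht0
    · simpa [update_eq_self] using hy
    · refine li_update_of_not_mem_span hy (fun hmem => hv ?_) j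
      have : v = t⁻¹ • (((1-t) • y j + t • v) - (1-t) • y j) := by
        rw [add_sub_cancel_left, smul_smul, inv_mul_cancel₀ ht0, one_smul]
      rw [this]
      exact smul_mem _ _ (sub_mem hmem (smul_mem _ _ (subset_span ⟨j, rfl⟩)))
  have step2 : JoinedIn (Sset E F k) (Phi f (update y j v)) (Phi f (update y j (-(y j)))) := by
    have h2 := joined_seg_y hf (update y j v) j (-(y j)) ?_
    · rwa [update_idem] at h2
    · intro t ht
      rw [update_idem, update_self]
      rcases eq_or_ne t 0 with rfl | ht0
      · simpa using hy1
      rcases eq_or_ne t 1 with rfl | ht1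
      · simpa using li_update_neg hy j
      · refine li_update_of_not_mem_span hy ?_ j
        intro hmem
        apply hv
        have htne : (1:ℝ) - t ≠ 0 := sub_ne_zero.mpr (Ne.symm ht1)
        have e : ((1-t) • v + t • (-(y j))) + t • y j = (1-t) • v := by module
        have : v = (1-t)⁻¹ • (((1-t) • v + t • (-(y j))) + t • y j) := by
          rw [e, smul_smul, inv_mul_cancel₀ htne, one_smul]
        rw [this]
        exact smul_mem _ _ (add_mem hmem (smul_mem _ _ (subset_span ⟨j, rfl⟩)))
  exact step1.trans step2






lemma joined_y_side (hk : (k : Cardinal) < Module.rank ℝ F)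
    {f : Fin k → (E →L[ℝ] ℝ)} (hf : LinearIndependent ℝ f)
    {y z : Fin k → F} (hy : LinearIndependent ℝ y) (hz : LinearIndependent ℝ z) :
    JoinedIn (Sset E F k) (Phi f y) (Phi f z) :=
  connect (fun a b => JoinedIn (Sset E F k) (Phi f a) (Phi f b))
    (fun hab hbc => hab.trans hbc)
    (fun ha => JoinedIn.refl (Phi_mem hf ha))
    (fun y j v h => joined_seg_y hf y j v h)
    (fun y j hy' => joined_flip_y hk hf hy' j)
    hy hz

lemma joined_f_side (hk : (k : Cardinal) < Module.rank ℝ F)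
    {f g : Fin k → (E →L[ℝ] ℝ)} (hf : LinearIndependent ℝ f)
    (hg : LinearIndependent ℝ g)
    {z : Fin k → F} (hz : LinearIndependent ℝ z) :
    JoinedIn (Sset E F k) (Phi f z) (Phi g z) :=
  connect (fun a b => JoinedIn (Sset E F k) (Phi a z) (Phi b z))
    (fun hab hbc => hab.trans hbc)
    (fun ha => JoinedIn.refl (Phi_mem ha hz))
    (fun a j v h => joined_seg_f a hz j v h)
    (fun a j ha => by
      show JoinedIn (Sset E F k) (Phi a z) (Phi (update a j (-(a j))) z)
      rw [← Phi_flip]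
      exact joined_flip_y hk ha hz j)
    hf hg

lemma exists_rep [CompleteSpace E] (T : E →L[ℝ] F) (hT : T ∈ Sset E F k) :
    ∃ (f : Fin k → (E →L[ℝ] ℝ)) (y : Fin k → F),
      LinearIndependent ℝ f ∧ LinearIndependent ℝ y ∧ Phi f y = T := by
  classical
  obtain ⟨hfin, hrank⟩ := hT
  haveI : FiniteDimensional ℝ (LinearMap.range (T : E →ₗ[ℝ] F)) := hfin
  let b : Module.Basis (Fin k) ℝ (LinearMap.range (T : E →ₗ[ℝ] F)) :=
    (Module.finBasis ℝ (LinearMap.range (T : E →ₗ[ℝ] F))).reindex (finCongr hrank)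
  let Tr : E →L[ℝ] (LinearMap.range (T : E →ₗ[ℝ] F)) :=
    T.codRestrict (LinearMap.range (T : E →ₗ[ℝ] F)) (fun x => LinearMap.mem_range_self (T : E →ₗ[ℝ] F) x)
  let f : Fin k → (E →L[ℝ] ℝ) := fun i =>
    (LinearMap.toContinuousLinearMap (b.coord i)).comp Tr
  let y : Fin k → F := fun i => (b i : F)
  have hy : LinearIndependent ℝ y :=
    (b.linearIndependent.map' (LinearMap.range (T : E →ₗ[ℝ] F)).subtype (ker_subtype _))
  have hsurj : ∀ i : Fin k, ∃ x : E, Tr x = b i := by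
    intro i
    obtain ⟨x, hx⟩ := (b i).2
    exact ⟨x, Subtype.ext hx⟩
  have hf : LinearIndependent ℝ f := by
    rw [Fintype.linearIndependent_iff]
    intro g hg i
    obtain ⟨x, hx⟩ := hsurj i
    have := congrArg (fun (S : E →L[ℝ] ℝ) => S x) hg
    simp only [ContinuousLinearMap.coe_sum', Finset.sum_apply,
      ContinuousLinearMap.coe_smul', Pi.smul_apply, ContinuousLinearMap.zero_apply,
      smul_eq_mul] at this
    have heval : ∀ l, f l x = if i = l then 1 else 0 := by
      intro l
      show (b.coord l) (Tr x) = _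
      rw [hx, Module.Basis.coord_apply, Module.Basis.repr_self]
      exact Finsupp.single_apply
    rw [Fintype.sum_congr _ _ (fun l => by rw [heval l]) ] at this
    simpa using this
  refine ⟨f, y, hf, hy, ?_⟩
  ext x
  rw [Phi_apply]
  have : ∀ i, f i x • y i = ((b.repr (Tr x) i • b i : LinearMap.range (T : E →ₗ[ℝ] F)) : F) := by
    intro i
    show (b.coord i) (Tr x) • y i = _
    rw [Module.Basis.coord_apply]
    rfl
  rw [Fintype.sum_congr _ _ this]
  rw [← Submodule.coe_sum]
  rw [Module.Basis.sum_repr b (Tr x)]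
  rfl


end FkAux


/-- **Theorem 2.3.**
Let `E, F` be real Banach spaces and `k < dim F` a natural number.  Then
`F_k = { T ∈ B(E,F) : range T finite-dimensional, dim range T = k }` is path
connected: any two of its elements are joined by a continuous path in `F_k`. -/
theorem Fk_pathConnected
    {E : Type*} [NormedAddCommGroup E] [NormedSpace ℝ E] [CompleteSpace E]
    {F : Type*} [NormedAddCommGroup F] [NormedSpace ℝ F] [CompleteSpace F]
    (k : ℕ) (hk : (k : Cardinal) < Module.rank ℝ F)
    (T₁ T₂ : E →L[ℝ] F)
    (hT₁ : T₁ ∈ {T : E →L[ℝ] F | FiniteDimensional ℝ (LinearMap.range (T : E →ₗ[ℝ] F)) ∧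
        Module.finrank ℝ (LinearMap.range (T : E →ₗ[ℝ] F)) = k})
    (hT₂ : T₂ ∈ {T : E →L[ℝ] F | FiniteDimensional ℝ (LinearMap.range (T : E →ₗ[ℝ] F)) ∧
        Module.finrank ℝ (LinearMap.range (T : E →ₗ[ℝ] F)) = k}) :
    JoinedIn {T : E →L[ℝ] F | FiniteDimensional ℝ (LinearMap.range (T : E →ₗ[ℝ] F)) ∧
        Module.finrank ℝ (LinearMap.range (T : E →ₗ[ℝ] F)) = k} T₁ T₂ := by
  obtain ⟨f, y, hf, hy, hfy⟩ := FkAux.exists_rep T₁ hT₁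
  obtain ⟨g, z, hg, hz, hgz⟩ := FkAux.exists_rep T₂ hT₂
  have h1 : JoinedIn (FkAux.Sset E F k) (FkAux.Phi f y) (FkAux.Phi f z) :=
    FkAux.joined_y_side hk hf hy hz
  have h2 : JoinedIn (FkAux.Sset E F k) (FkAux.Phi f z) (FkAux.Phi g z) :=
    FkAux.joined_f_side hk hf hg hz
  have := h1.trans h2
  rw [hfy, hgz] at this
  exact this
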